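/- Let p ∈ (0,1), let k ≥ 1 be an integer, set a = 1/p, and for j ∈ ℕ set h_j = p^(1/k) · (1−p)^j · (∏_{i=0}^{j−1} (1/k + i)) / j!. Let F and G be cumulative distribution functions on ℝ. Then the following are equivalent: (i) F(x)^k = p·G(x)^k + (1−p)·F(x)^k·G(x)^k for all x ∈ ℝ (the stationarity equation of the generalized max-AR(1) model (4)); (ii) F(x) = G(x) / (a − (a−1)·G(x)^k)^(1/k) for all x ∈ ℝ; (iii) F(x) = ∑_{j=0}^{∞} h_j · G(x)^(1+jk) for all x ∈ ℝ, i.e. F is the Harris(a,k)-maximum of i.i.d. random variables with cdf G. -/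

import Mathlib

open Filter

/-- A cumulative distribution function on ℝ: nondecreasing, right-continuous,
with limit 0 at -∞ and limit 1 at +∞. -/
def IsCDF (F : ℝ → ℝ) : Prop :=
  Monotone F ∧ (∀ x : ℝ, ContinuousWithinAt F (Set.Ici x) x) ∧
    Tendsto F atBot (nhds 0) ∧ Tendsto F atTop (nhds 1)

/-- The Harris(a,k) point probabilities `h j` (probability of the point `1 + j*k`). -/
noncomputable def harrisPMF (p : ℝ) (k : ℕ) (j : ℕ) : ℝ :=
  p ^ (1 / (k : ℝ)) * (1 - p) ^ j *
    (∏ i ∈ Finset.range j, (1 / (k : ℝ) + (i : ℝ))) / (Nat.factorial j : ℝ)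


open Filter Finset

/-- Binomial coefficient for the generalized binomial series. -/
noncomputable def bc (α : ℝ) (j : ℕ) : ℝ :=
  (∏ i ∈ Finset.range j, (α + i)) / (Nat.factorial j : ℝ)

lemma bc_nonneg {α : ℝ} (hα : 0 < α) (j : ℕ) : 0 ≤ bc α j := by
  apply div_nonneg
  · exact Finset.prod_nonneg fun i _ => by positivity
  · positivity

lemma bc_le_one {α : ℝ} (hα : 0 < α) (hα1 : α ≤ 1) (j : ℕ) : bc α j ≤ 1 := by
  rw [bc, div_le_one (by positivity)]
  calc (∏ i ∈ Finset.range j, (α + i)) ≤ ∏ i ∈ Finset.range j, ((i : ℝ) + 1) := by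
        apply Finset.prod_le_prod (fun i _ => by positivity) (fun i _ => by linarith)
    _ = (Nat.factorial j : ℝ) := by
        rw [← Finset.prod_range_add_one_eq_factorial j]
        push_cast
        exact Finset.prod_congr rfl fun i _ => by ring

lemma bc_succ (α : ℝ) (j : ℕ) :
    bc α (j + 1) * (j + 1) = bc α j * (α + j) := by
  have h1 : (Nat.factorial (j+1) : ℝ) = (j+1) * (Nat.factorial j : ℝ) := by
    rw [Nat.factorial_succ]; push_cast; ring
  rw [bc, bc, Finset.prod_range_succ, h1]
  have h2 : (Nat.factorial j : ℝ) ≠ 0 := by positivity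
  field_simp

lemma binomial_hasSum {α : ℝ} (hα : 0 < α) (hα1 : α ≤ 1) {x : ℝ} (hx0 : 0 ≤ x) (hx1 : x < 1) :
    HasSum (fun j : ℕ => bc α j * x ^ j) ((1 - x) ^ (-α) : ℝ) := by
  set b : ℝ := (x + 1) / 2 with hb
  have hxb : x < b := by rw [hb]; linarith
  have hb0 : 0 < b := by rw [hb]; linarith
  have hb1 : b < 1 := by rw [hb]; linarith
  set t : Set ℝ := Set.Ioo (-b) b with ht
  have hto : IsOpen t := isOpen_Ioo
  have htc : IsPreconnected t := (convex_Ioo _ _).isPreconnected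
  have h0t : (0 : ℝ) ∈ t := ⟨by linarith, hb0⟩
  have hxt : x ∈ t := ⟨by linarith, hxb⟩
  -- summability of the series on t
  have hbound : ∀ y ∈ t, ∀ j : ℕ, |bc α j * y ^ j| ≤ b ^ j := by
    intro y hy j
    rw [abs_mul, abs_of_nonneg (bc_nonneg hα j), abs_pow]
    calc bc α j * |y| ^ j ≤ 1 * b ^ j := by
          apply mul_le_mul (bc_le_one hα hα1 j)
            (pow_le_pow_left₀ (abs_nonneg y) (abs_lt.2 ⟨hy.1, hy.2⟩).le j)
            (by positivity) zero_le_one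
      _ = b ^ j := one_mul _
  have hsummable : ∀ y ∈ t, Summable fun j : ℕ => bc α j * y ^ j := by
    intro y hy
    exact Summable.of_abs (Summable.of_nonneg_of_le (fun j => abs_nonneg _)
      (hbound y hy) (summable_geometric_of_lt_one hb0.le hb1))
  set S : ℝ → ℝ := fun y => ∑' j : ℕ, bc α j * y ^ j with hS
  -- derivative bound
  set u : ℕ → ℝ := fun j => (j : ℝ) * b ^ (j - 1) with hu
  have hu_sum : Summable u := by
    rw [← summable_nat_add_iff 1]
    have : (fun j : ℕ => u (j + 1)) = fun j : ℕ => ((j : ℝ) * b ^ j + b ^ j) := by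
      funext j; simp [hu]; push_cast; ring
    rw [this]
    exact ((summable_pow_mul_geometric_of_norm_lt_one 1 (by
      rwa [Real.norm_eq_abs, abs_of_nonneg hb0.le])).congr (by intro j; simp)).add
      (summable_geometric_of_lt_one hb0.le hb1)
  have hg : ∀ (j : ℕ) (y : ℝ), y ∈ t →
      HasDerivAt (fun z => bc α j * z ^ j) (bc α j * ((j : ℝ) * y ^ (j - 1))) y := by
    intro j y _
    exact (hasDerivAt_pow j y).const_mul (bc α j)
  have hg' : ∀ (j : ℕ) (y : ℝ), y ∈ t → ‖bc α j * ((j : ℝ) * y ^ (j - 1))‖ ≤ u j := by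
    intro j y hy
    rw [Real.norm_eq_abs, abs_mul, abs_mul]
    rw [abs_of_nonneg (bc_nonneg hα j), abs_of_nonneg (by positivity : (0:ℝ) ≤ (j:ℝ)), abs_pow]
    calc bc α j * ((j : ℝ) * |y| ^ (j - 1)) ≤ 1 * ((j : ℝ) * b ^ (j - 1)) := by
          apply mul_le_mul (bc_le_one hα hα1 j) _ (by positivity) zero_le_one
          exact mul_le_mul_of_nonneg_left
            (pow_le_pow_left₀ (abs_nonneg y) (abs_lt.2 ⟨hy.1, hy.2⟩).le _) (by positivity)
      _ = u j := one_mul _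
  have hderiv : ∀ y ∈ t,
      HasDerivAt S (∑' j : ℕ, bc α j * ((j : ℝ) * y ^ (j - 1))) y := by
    intro y hy
    exact hasDerivAt_tsum_of_isPreconnected hu_sum hto htc hg hg' h0t (hsummable 0 h0t) hy
  -- the ODE: (1-y) S' y = α S y
  have hODE : ∀ y ∈ t, (1 - y) * (∑' j : ℕ, bc α j * ((j : ℝ) * y ^ (j - 1))) = α * S y := by
    intro y hy
    have hsum' : Summable fun j : ℕ => bc α j * ((j : ℝ) * y ^ (j - 1)) :=
      Summable.of_norm_bounded hu_sum (fun j => hg' j y hy)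
    set A : ℝ := ∑' j : ℕ, bc α j * ((j : ℝ) * y ^ (j - 1)) with hA
    have hAsum : HasSum (fun j : ℕ => bc α j * ((j : ℝ) * y ^ (j - 1))) A := hsum'.hasSum
    have hshift : HasSum (fun j : ℕ => bc α j * (α + (j : ℝ)) * y ^ j) A := by
      have h' := (hasSum_nat_add_iff' (f := fun j : ℕ => bc α j * ((j : ℝ) * y ^ (j - 1))) 1).2
        hAsum
      simp only [Finset.range_one, Finset.sum_singleton, Nat.cast_zero, zero_mul, mul_zero,
        sub_zero] at h'
      have hfun0 : (fun n : ℕ => bc α (n + 1) * ((↑(n + 1) : ℝ) * y ^ (n + 1 - 1)))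
          = fun j : ℕ => bc α j * (α + (j : ℝ)) * y ^ j := by
        funext j
        simp only [Nat.add_sub_cancel, Nat.cast_add, Nat.cast_one]
        have hb := bc_succ α j
        calc bc α (j + 1) * (((j : ℝ) + 1) * y ^ j)
            = (bc α (j + 1) * ((j : ℝ) + 1)) * y ^ j := by ring
          _ = (bc α j * (α + j)) * y ^ j := by rw [hb]
          _ = bc α j * (α + (j : ℝ)) * y ^ j := by ring
      rwa [hfun0] at h'
    have h1 : HasSum (fun j : ℕ => α * (bc α j * y ^ j)) (α * S y) :=
      (hsummable y hy).hasSum.mul_left α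
    have h2 : HasSum (fun j : ℕ => y * (bc α j * ((j : ℝ) * y ^ (j - 1)))) (y * A) :=
      hAsum.mul_left y
    have hfun2 : (fun j : ℕ => α * (bc α j * y ^ j) + y * (bc α j * ((j : ℝ) * y ^ (j - 1))))
        = fun j : ℕ => bc α j * (α + (j : ℝ)) * y ^ j := by
      funext j
      have hjy : (j : ℝ) * y ^ (j - 1) * y = (j : ℝ) * y ^ j := by
        cases j with
        | zero => simp
        | succ n =>
          simp only [Nat.add_sub_cancel, Nat.cast_add, Nat.cast_one]
          rw [pow_succ]; ring
      calc α * (bc α j * y ^ j) + y * (bc α j * ((j : ℝ) * y ^ (j - 1)))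
          = bc α j * (α * y ^ j) + bc α j * ((j : ℝ) * y ^ (j - 1) * y) := by ring
        _ = bc α j * (α * y ^ j) + bc α j * ((j : ℝ) * y ^ j) := by rw [hjy]
        _ = bc α j * (α + (j : ℝ)) * y ^ j := by ring
    have h3 : HasSum (fun j : ℕ => bc α j * (α + (j : ℝ)) * y ^ j) (α * S y + y * A) :=
      hfun2 ▸ (h1.add h2)
    have := hshift.unique h3
    linarith
  -- the auxiliary function h = S * (1-·)^α has zero derivative on t
  have hpos : ∀ y ∈ t, (0 : ℝ) < 1 - y := fun y hy => by
    have := hy.2; simp only [ht, Set.mem_Ioo] at hy; linarith [hy.2]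
  set h : ℝ → ℝ := fun y => S y * (1 - y) ^ α with hh
  have hderivh : ∀ y ∈ t, HasDerivAt h 0 y := by
    intro y hy
    have h1y := hpos y hy
    have d1 : HasDerivAt S (∑' j : ℕ, bc α j * ((j : ℝ) * y ^ (j - 1))) y := hderiv y hy
    have d2 : HasDerivAt (fun z : ℝ => (1 - z) ^ α) (α * (1 - y) ^ (α - 1) * (-1)) y := by
      have e1 : HasDerivAt (fun z : ℝ => 1 - z) (-1) y := (hasDerivAt_id y).const_sub 1
      have e2 := Real.hasDerivAt_rpow_const (x := 1 - y) (p := α) (Or.inl h1y.ne')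
      exact e2.comp y e1
    have d3 := d1.mul d2
    convert d3 using 1
    · rfl
    · rfl
    · rfl
    set A : ℝ := ∑' j : ℕ, bc α j * ((j : ℝ) * y ^ (j - 1)) with hA
    have hode := hODE y hy
    have hsplit : (1 - y) ^ α = (1 - y) ^ (α - 1) * (1 - y) := by
      rw [← Real.rpow_add_one h1y.ne' (α - 1)]
      norm_num
    rw [hsplit]
    calc (0 : ℝ) = ((1 - y) * A - α * S y) * (1 - y) ^ (α - 1) := by rw [hode]; ring
      _ = A * ((1 - y) ^ (α - 1) * (1 - y)) + S y * (α * (1 - y) ^ (α - 1) * (-1)) := by ring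
  -- constancy on [0, x]
  have hsub : Set.Icc (0 : ℝ) x ⊆ t := by
    intro y hy
    exact ⟨by linarith [hy.1], lt_of_le_of_lt hy.2 hxb⟩
  have hcont : ContinuousOn h (Set.Icc 0 x) := fun y hy =>
    ((hderivh y (hsub hy)).continuousAt).continuousWithinAt
  have hdw : ∀ y ∈ Set.Ico (0 : ℝ) x, HasDerivWithinAt h 0 (Set.Ici y) y := fun y hy =>
    (hderivh y (hsub (Set.Ico_subset_Icc_self hy))).hasDerivWithinAt
  have hconst := constant_of_has_deriv_right_zero hcont hdw x (Set.mem_Icc.2 ⟨hx0, le_refl x⟩)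
  -- h 0 = 1
  have hS0 : S 0 = 1 := by
    have h0 : S 0 = ∑' j : ℕ, bc α j * (0 : ℝ) ^ j := rfl
    rw [h0, tsum_eq_single 0 (fun j hj => by simp [zero_pow hj])]
    simp [bc]
  have hh0 : h 0 = 1 := by
    have : h 0 = S 0 * (1 - 0 : ℝ) ^ α := rfl
    rw [this, hS0, sub_zero, Real.one_rpow, one_mul]
  have hx1' : (0 : ℝ) < 1 - x := by linarith
  have hSx : S x = (1 - x) ^ (-α) := by
    have hx' : S x * (1 - x) ^ α = h 0 := hconst
    rw [hh0] at hx'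
    have : S x * (1 - x) ^ α = 1 := hx'
    have hne : (1 - x) ^ α ≠ 0 := (Real.rpow_pos_of_pos hx1' α).ne'
    rw [Real.rpow_neg hx1'.le]
    field_simp at this ⊢
    linarith [this]
  have hfin := (hsummable x hxt).hasSum
  rwa [show (∑' j : ℕ, bc α j * x ^ j) = S x from rfl, hSx] at hfin

lemma cdf_nonneg {F : ℝ → ℝ} (hF : IsCDF F) (x : ℝ) : 0 ≤ F x :=
  le_of_tendsto hF.2.2.1 (Filter.eventually_atBot.2 ⟨x, fun _ hy => hF.1 hy⟩)

lemma cdf_le_one {F : ℝ → ℝ} (hF : IsCDF F) (x : ℝ) : F x ≤ 1 :=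
  ge_of_tendsto hF.2.2.2 (Filter.eventually_atTop.2 ⟨x, fun _ hy => hF.1 hy⟩)

section pointwise

variable {p : ℝ} (hp : p ∈ Set.Ioo (0 : ℝ) 1) {k : ℕ} (hk : 1 ≤ k) {a : ℝ} (ha : a = 1 / p)
  {f g : ℝ} (hf0 : 0 ≤ f) (hg0 : 0 ≤ g) (hg1 : g ≤ 1)

include hp hk ha hf0 hg0 hg1

lemma pointwiseA :
    (f ^ k = p * g ^ k + (1 - p) * f ^ k * g ^ k)
      ↔ f = g / (a - (a - 1) * g ^ k) ^ ((1 : ℝ) / (k : ℝ)) := by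
  obtain ⟨hp0, hp1⟩ := hp
  have hk0 : k ≠ 0 := by omega
  have hkR : (0 : ℝ) < (k : ℝ) := by positivity
  set gk : ℝ := g ^ k with hgk
  have hgk0 : 0 ≤ gk := by positivity
  have hgk1 : gk ≤ 1 := pow_le_one₀ hg0 hg1
  set q : ℝ := 1 - (1 - p) * gk with hq
  have hqp : p ≤ q := by nlinarith
  have hq0 : 0 < q := lt_of_lt_of_le hp0 hqp
  have hD : a - (a - 1) * gk = q / p := by
    rw [ha, hq]; field_simp
  set r : ℝ := (q / p) ^ ((1 : ℝ) / (k : ℝ)) with hr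
  have hr0 : 0 < r := Real.rpow_pos_of_pos (by positivity) _
  have hrk : r ^ k = q / p := by
    rw [hr, ← Real.rpow_natCast ((q / p) ^ ((1 : ℝ) / (k : ℝ))) k,
      ← Real.rpow_mul (by positivity : (0:ℝ) ≤ q / p)]
    rw [one_div_mul_cancel hkR.ne', Real.rpow_one]
  rw [hD]
  constructor
  · intro h
    have hfk : f ^ k * q = p * gk := by rw [hq]; linear_combination h
    have heq : f ^ k = (g / r) ^ k := by
      rw [div_pow, hrk, div_div_eq_mul_div, ← hgk]
      rw [eq_div_iff hq0.ne']
      linear_combination hfk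
    exact (pow_left_strictMonoOn₀ hk0).injOn (Set.mem_setOf.2 hf0)
      (Set.mem_setOf.2 (by positivity)) heq
  · intro h
    have hfk2 : f ^ k * q = p * gk := by
      rw [h, div_pow, hrk, div_div_eq_mul_div, ← hgk]
      field_simp
    linear_combination hfk2 - f ^ k * hq

omit hf0 in
lemma pointwiseB :
    (f = g / (a - (a - 1) * g ^ k) ^ ((1 : ℝ) / (k : ℝ)))
      ↔ HasSum (fun j : ℕ => harrisPMF p k j * g ^ (1 + j * k)) f := by
  obtain ⟨hp0, hp1⟩ := hp
  have hk0 : k ≠ 0 := by omega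
  have hkR : (0 : ℝ) < (k : ℝ) := by positivity
  have hkR1 : (1 : ℝ) ≤ (k : ℝ) := by exact_mod_cast hk
  set α : ℝ := 1 / (k : ℝ) with hα
  have hα0 : 0 < α := by rw [hα]; positivity
  have hα1 : α ≤ 1 := by rw [hα, div_le_one hkR]; exact hkR1
  set gk : ℝ := g ^ k with hgk
  have hgk0 : 0 ≤ gk := by positivity
  have hgk1 : gk ≤ 1 := pow_le_one₀ hg0 hg1
  set q : ℝ := 1 - (1 - p) * gk with hq
  have hqp : p ≤ q := by nlinarith
  have hq0 : 0 < q := lt_of_lt_of_le hp0 hqp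
  have hD : a - (a - 1) * gk = q / p := by rw [ha, hq]; field_simp
  set x₀ : ℝ := (1 - p) * gk with hx₀
  have hx₀0 : 0 ≤ x₀ := by rw [hx₀]; nlinarith
  have hx₀1 : x₀ < 1 := by rw [hx₀]; nlinarith
  have HS := (binomial_hasSum hα0 hα1 hx₀0 hx₀1).mul_left (g * p ^ α)
  have hfun : (fun j : ℕ => (g * p ^ α) * (bc α j * x₀ ^ j))
      = fun j : ℕ => harrisPMF p k j * g ^ (1 + j * k) := by
    funext j
    rw [harrisPMF, bc, hx₀, mul_pow]
    have hgpow : g ^ (1 + j * k) = g * (g ^ k) ^ j := by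
      rw [pow_add, pow_one, mul_comm j k, pow_mul]
    rw [hgpow, ← hgk, ← hα]
    ring
  rw [hfun] at HS
  have hval : (g * p ^ α) * (1 - x₀) ^ (-α) = g / (q / p) ^ α := by
    have hqα : (0:ℝ) < q ^ α := Real.rpow_pos_of_pos hq0 _
    have hpα : (0:ℝ) < p ^ α := Real.rpow_pos_of_pos hp0 _
    rw [← hq, Real.div_rpow hq0.le hp0.le, Real.rpow_neg hq0.le]
    field_simp
  rw [hval] at HS
  rw [hD]
  constructor
  · intro h; rw [h]; exact HS
  · intro h
    exact h.unique HS
end pointwise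


/-- Theorem 3.3: for cdfs `F`, `G`, the stationarity equation of the generalized max-AR(1)
model (4) holds iff `F = P(G)` with `P` the Harris(a,k) PGF, iff `F` is the
Harris(a,k)-maximum of i.i.d. random variables with cdf `G`. -/
theorem stationarity_generalized_max_AR1_iff_harris_maximum
    (p : ℝ) (hp : p ∈ Set.Ioo (0 : ℝ) 1) (k : ℕ) (hk : 1 ≤ k) (a : ℝ) (ha : a = 1 / p)
    (F G : ℝ → ℝ) (hF : IsCDF F) (hG : IsCDF G) :
    ((∀ x : ℝ, F x ^ k = p * G x ^ k + (1 - p) * F x ^ k * G x ^ k)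
        ↔ (∀ x : ℝ, F x = G x / (a - (a - 1) * G x ^ k) ^ ((1 : ℝ) / (k : ℝ)))) ∧
    ((∀ x : ℝ, F x = G x / (a - (a - 1) * G x ^ k) ^ ((1 : ℝ) / (k : ℝ)))
        ↔ (∀ x : ℝ, HasSum (fun j : ℕ => harrisPMF p k j * G x ^ (1 + j * k)) (F x))) := by
  constructor
  · exact forall_congr' fun x =>
      pointwiseA hp hk ha (cdf_nonneg hF x) (cdf_nonneg hG x) (cdf_le_one hG x)
  · exact forall_congr' fun x =>
      pointwiseB hp hk ha (cdf_nonneg hG x) (cdf_le_one hG x)
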